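/- arXiv:2405.18301 — 5 statements merged into one kernel-verified Lean document; each statement's English description precedes it below -/
import Mathlib

section
/- For every bounded, open, connected, simply connected set Ω ⊂ ℂ whose frontier ∂Ω is the image of an injective continuous map of the unit circle, the medial axis MA(Ω) is nonempty; that is, there exists z ∈ Ω and two distinct points w, w' ∈ ∂Ω with |z − w| = |z − w'| = dist(z, ∂Ω). -/
open Set Metric MeasureTheory Filter
open scoped ENNReal NNReal Topology
open scoped RealInnerProductSpace

noncomputable section

/-- The medial axis of an open set `Ω ⊂ ℂ`: the set of points of `Ω` having at least two
distinct closest points on the frontier. -/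
def medialAxis (Ω : Set ℂ) : Set ℂ :=
  {z | z ∈ Ω ∧ ∃ w ∈ frontier Ω, ∃ w' ∈ frontier Ω, w ≠ w' ∧
    dist z w = Metric.infDist z (frontier Ω) ∧
    dist z w' = Metric.infDist z (frontier Ω)}

/-- The frontier of `Q` is a finite union of nontrivial line segments. -/
def IsPolygonalBoundary (Q : Set ℂ) : Prop :=
  ∃ (n : ℕ) (p q : Fin n → ℂ), (∀ i, p i ≠ q i) ∧
    frontier Q = ⋃ i, segment ℝ (p i) (q i)


/-- The ball around an interior point of radius the distance to the frontier stays inside. -/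
lemma ball_infDist_frontier_subset {Ω : Set ℂ} (hopen : IsOpen Ω) {z : ℂ} (hz : z ∈ Ω) :
    Metric.ball z (Metric.infDist z (frontier Ω)) ⊆ Ω := by
  set d := Metric.infDist z (frontier Ω)
  rcases le_or_gt d 0 with hd | hd
  · simp [Metric.ball_eq_empty.2 hd]
  · have hzb : z ∈ Metric.ball z d := Metric.mem_ball_self hd
    have hsub : Metric.ball z d ⊆ Ω ∪ (closure Ω)ᶜ := by
      intro x hx
      have hxf : x ∉ frontier Ω := by
        intro hxf
        have h1 := Metric.infDist_le_dist_of_mem (x := z) hxf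
        rw [dist_comm] at h1
        exact absurd hx (not_lt.2 h1)
      by_cases hxc : x ∈ closure Ω
      · left
        have : x ∈ interior Ω := by
          by_contra hxi
          exact hxf ⟨hxc, hxi⟩
        rwa [hopen.interior_eq] at this
      · right; exact hxc
    have hdisj : Disjoint Ω (closure Ω)ᶜ :=
      disjoint_compl_right.mono_left subset_closure
    exact (convex_ball z d).isPreconnected.subset_left_of_subset_union hopen
      isClosed_closure.isOpen_compl hdisj hsub ⟨z, hzb, hz⟩

/-- The medial axis of a bounded Jordan domain in `ℂ` is nonempty. -/
theorem medialAxis_nonempty (Ω : Set ℂ) (hopen : IsOpen Ω)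
    (hbounded : Bornology.IsBounded Ω) (hconn : IsConnected Ω)
    (hsimply : SimplyConnectedSpace Ω)
    (γ : ℝ → ℂ) (hγc : Continuous γ) (hγp : Function.Periodic γ 1)
    (hγi : Set.InjOn γ (Set.Ico 0 1)) (hγim : γ '' Set.Ico 0 1 = frontier Ω) :
    ∃ z ∈ Ω, ∃ w ∈ frontier Ω, ∃ w' ∈ frontier Ω, w ≠ w' ∧
      dist z w = Metric.infDist z (frontier Ω) ∧
      dist z w' = Metric.infDist z (frontier Ω) := by
  set F := frontier Ω with hF
  -- two distinct points on the frontier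
  have h0 : (0 : ℝ) ∈ Set.Ico (0:ℝ) 1 := by constructor <;> norm_num
  have h12 : (1/2 : ℝ) ∈ Set.Ico (0:ℝ) 1 := by constructor <;> norm_num
  have ha : γ 0 ∈ F := hγim ▸ Set.mem_image_of_mem γ h0
  have hb : γ (1/2) ∈ F := hγim ▸ Set.mem_image_of_mem γ h12
  have hab : γ 0 ≠ γ (1/2) := by
    intro h
    have := hγi h0 h12 h
    norm_num at this
  have hFc : IsClosed F := isClosed_frontier
  have hFcpt : IsCompact F :=
    hbounded.isCompact_closure.of_isClosed_subset hFc frontier_subset_closure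
  have hFne : F.Nonempty := ⟨γ 0, ha⟩
  -- maximize the distance function on the (compact) closure of Ω
  have hclcpt : IsCompact (closure Ω) := hbounded.isCompact_closure
  have hclne : (closure Ω).Nonempty := hconn.nonempty.closure
  obtain ⟨z, hzcl, hzmax⟩ := hclcpt.exists_isMaxOn hclne
    (continuous_infDist_pt F).continuousOn
  set d := Metric.infDist z F with hd
  -- d > 0
  obtain ⟨x, hx⟩ := hconn.nonempty
  have hxF : x ∉ F := by
    intro hxF
    exact hxF.2 (by rwa [hopen.interior_eq])
  have hxpos : 0 < Metric.infDist x F := (hFc.notMem_iff_infDist_pos hFne).1 hxF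
  have hdpos : 0 < d := lt_of_lt_of_le hxpos (hzmax (subset_closure hx))
  -- z ∈ Ω
  have hzΩ : z ∈ Ω := by
    by_contra hzΩ
    have hzF : z ∈ F := ⟨hzcl, by rwa [hopen.interior_eq]⟩
    have : d = 0 := Metric.infDist_zero_of_mem hzF
    linarith
  -- nearest point
  obtain ⟨w, hwF, hw⟩ := hFcpt.exists_infDist_eq_dist hFne z
  -- a frontier point different from w
  obtain ⟨w₀, hw₀F, hww₀⟩ : ∃ w₀ ∈ F, w ≠ w₀ := by
    by_cases h : w = γ 0
    · exact ⟨γ (1/2), hb, h ▸ hab⟩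
    · exact ⟨γ 0, ha, h⟩
  have hdww₀ : 0 < dist w w₀ := dist_pos.2 hww₀
  set r := min (d / 2) (dist w w₀ / 2) with hr
  have hrpos : 0 < r := lt_min (by linarith) (by linarith)
  have hrd : r < d := lt_of_le_of_lt (min_le_left _ _) (by linarith)
  -- the far part of the frontier
  set K := F \ Metric.ball w r with hK
  have hKc : IsClosed K := hFc.inter isOpen_ball.isClosed_compl
  have hKcpt : IsCompact K := hFcpt.of_isClosed_subset hKc diff_subset
  have hKne : K.Nonempty := by
    refine ⟨w₀, hw₀F, ?_⟩
    simp only [Metric.mem_ball, not_lt]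
    rw [dist_comm]
    calc r ≤ dist w w₀ / 2 := min_le_right _ _
    _ ≤ dist w w₀ := by linarith
  obtain ⟨v, hvK, hv⟩ := hKcpt.exists_infDist_eq_dist hKne z
  set m := dist z v with hm
  have hvF : v ∈ F := hvK.1
  have hvw : v ≠ w := by
    intro h
    exact hvK.2 (h ▸ Metric.mem_ball_self hrpos)
  have hmd : d ≤ m := Metric.infDist_le_dist_of_mem hvF
  rcases eq_or_lt_of_le hmd with heq | hlt
  · -- two distinct nearest points: done
    exact ⟨z, hzΩ, w, hwF, v, hvF, fun h => hvw h.symm, hw.symm, heq.symm⟩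
  · -- unique nearest point near w: move away from w, contradiction with maximality
    exfalso
    set ε := min (d / 2) ((m - d) / 2) with hε
    have hεpos : 0 < ε := lt_min (by linarith) (by linarith)
    have hεd : ε < d := lt_of_le_of_lt (min_le_left _ _) (by linarith)
    have hεm : ε ≤ (m - d) / 2 := min_le_right _ _
    set u : ℂ := (d⁻¹ : ℝ) • (z - w) with hu
    have hzw : ‖z - w‖ = d := by
      rw [← dist_eq_norm]; exact hw.symm
    have hunorm : ‖u‖ = 1 := by
      rw [hu, norm_smul, Real.norm_eq_abs, abs_of_pos (inv_pos.2 hdpos), hzw]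
      field_simp
    set z' := z + (ε : ℝ) • u with hz'
    have hdistzz' : dist z' z = ε := by
      rw [hz', dist_eq_norm, add_sub_cancel_left, norm_smul, Real.norm_eq_abs,
        abs_of_pos hεpos, hunorm, mul_one]
    -- z' ∈ closure Ω
    have hz'cl : z' ∈ closure Ω := by
      apply subset_closure
      apply ball_infDist_frontier_subset hopen hzΩ
      rw [Metric.mem_ball, hdistzz']
      exact hεd
    -- key: infDist z' F > d
    obtain ⟨v', hv'F, hv'⟩ := hFcpt.exists_infDist_eq_dist hFne z'
    have hkey : d < dist z' v' := by
      by_cases hnear : v' ∈ Metric.ball w r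
      · -- near w: inner product estimate
        have hinner : d - r ≤ ⟪z - v', u⟫ := by
          have h1 : ⟪z - w, u⟫ = d := by
            rw [hu, real_inner_smul_right, real_inner_self_eq_norm_sq, hzw]
            field_simp
          have h2 : -(‖w - v'‖) ≤ ⟪w - v', u⟫ := by
            have := abs_real_inner_le_norm (w - v') u
            rw [hunorm, mul_one] at this
            linarith [neg_abs_le (⟪w - v', u⟫)]
          have h3 : ‖w - v'‖ < r := by
            rw [← dist_eq_norm, dist_comm]
            exact Metric.mem_ball.1 hnear
          have h4 : z - v' = (z - w) + (w - v') := by ring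
          rw [h4, inner_add_left, h1]
          linarith
        have hsq : ‖z' - v'‖ ^ 2 ≥ ‖z - v'‖ ^ 2 + 2 * ε * (d - r) := by
          have h5 : z' - v' = (z - v') + (ε : ℝ) • u := by rw [hz']; ring
          rw [h5, norm_add_sq_real, real_inner_smul_right]
          nlinarith [sq_nonneg ‖(ε:ℝ) • u‖]
        have hzv' : d ≤ ‖z - v'‖ := by
          rw [← dist_eq_norm]
          exact Metric.infDist_le_dist_of_mem hv'F
        have hsq2 : d ^ 2 < ‖z' - v'‖ ^ 2 := by nlinarith
        rw [dist_eq_norm]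
        nlinarith [norm_nonneg (z' - v')]
      · -- far from w : v' ∈ K
        have hv'K : v' ∈ K := ⟨hv'F, hnear⟩
        have h6 : m ≤ dist z v' := hv ▸ Metric.infDist_le_dist_of_mem hv'K
        have h7 : dist z v' ≤ dist z z' + dist z' v' := dist_triangle _ _ _
        rw [dist_comm z z', hdistzz'] at h7
        linarith
    have hle : Metric.infDist z' F ≤ d := hzmax hz'cl
    rw [hv'] at hle
    linarith
end
end

section
/- Let Q be a Jordan quadrilateral and let (Qₙ) be an increasing sequence of Jordan quadrilaterals (Qₙ ⊆ Qₙ₊₁) converging to Q from inside. If for every n there exist cₙ ∈ Qₙ and rₙ > 0 such that the open disk D(cₙ,rₙ) is contained in Qₙ and the circle {z : |z − cₙ| = rₙ} ∩ ∂Qₙ contains points of three distinct sides of Qₙ, then there exist c ∈ Q and r > 0 such that the open disk D(c,r) is contained in Q and the circle {z : |z − c| = r} ∩ ∂Q contains points of three distinct sides of Q. -/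
open Set Metric MeasureTheory Filter
open scoped ENNReal NNReal Topology

noncomputable section

/-- A Jordan quadrilateral: a bounded, open, connected, simply connected subset `Q` of `ℂ`
whose frontier is a Jordan curve (the image of an injective continuous map of the unit circle,
here parametrized by a continuous `1`-periodic map `γ : ℝ → ℂ` injective on `[0,1)`),
together with four marked points `γ t₁, γ t₂, γ t₃, γ t₄` on the frontier in cyclic order. -/
structure JordanQuadrilateral where
  Q : Set ℂ
  isOpen : IsOpen Q
  isBounded : Bornology.IsBounded Q
  isConnected : IsConnected Q
  simplyConnected : SimplyConnectedSpace Q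
  γ : ℝ → ℂ
  γ_continuous : Continuous γ
  γ_periodic : Function.Periodic γ 1
  γ_injOn : Set.InjOn γ (Set.Ico 0 1)
  γ_image : γ '' Set.Ico 0 1 = frontier Q
  t₁ : ℝ
  t₂ : ℝ
  t₃ : ℝ
  t₄ : ℝ
  ht₁ : 0 ≤ t₁
  h₁₂ : t₁ < t₂
  h₂₃ : t₂ < t₃
  h₃₄ : t₃ < t₄
  ht₄ : t₄ < 1

namespace JordanQuadrilateral

/-- The first quad-vertex `v₁`. -/
def v₁ (Q : JordanQuadrilateral) : ℂ := Q.γ Q.t₁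

/-- The second quad-vertex `v₂`. -/
def v₂ (Q : JordanQuadrilateral) : ℂ := Q.γ Q.t₂

/-- The third quad-vertex `v₃`. -/
def v₃ (Q : JordanQuadrilateral) : ℂ := Q.γ Q.t₃

/-- The fourth quad-vertex `v₄`. -/
def v₄ (Q : JordanQuadrilateral) : ℂ := Q.γ Q.t₄

/-- The side `a₁`, the boundary arc from `v₁` to `v₂`. -/
def a₁ (Q : JordanQuadrilateral) : Set ℂ := Q.γ '' Set.Icc Q.t₁ Q.t₂

/-- The side `b₁`, the boundary arc from `v₂` to `v₃`. -/
def b₁ (Q : JordanQuadrilateral) : Set ℂ := Q.γ '' Set.Icc Q.t₂ Q.t₃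

/-- The side `a₂`, the boundary arc from `v₃` to `v₄`. -/
def a₂ (Q : JordanQuadrilateral) : Set ℂ := Q.γ '' Set.Icc Q.t₃ Q.t₄

/-- The side `b₂`, the boundary arc from `v₄` to `v₁`. -/
def b₂ (Q : JordanQuadrilateral) : Set ℂ := Q.γ '' Set.Icc Q.t₄ (Q.t₁ + 1)

/-- The four sides of the quadrilateral, indexed cyclically: `a₁, b₁, a₂, b₂`. -/
def side (Q : JordanQuadrilateral) : Fin 4 → Set ℂ := ![Q.a₁, Q.b₁, Q.a₂, Q.b₂]

/-- The four quad-vertices, indexed cyclically. -/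
def vertex (Q : JordanQuadrilateral) : Fin 4 → ℂ := ![Q.v₁, Q.v₂, Q.v₃, Q.v₄]

/-- The internal distance `s_a(Q)` between the `a`-sides: the infimum of lengths of
rectifiable arcs in `closure Q` with interior in `Q` joining `a₁` to `a₂`. -/
def sa (Q : JordanQuadrilateral) : ℝ≥0∞ :=
  ⨅ (g : ℝ → ℂ) (_ : ContinuousOn g (Set.Icc 0 1))
    (_ : Set.MapsTo g (Set.Icc 0 1) (closure Q.Q))
    (_ : Set.MapsTo g (Set.Ioo 0 1) Q.Q)
    (_ : g 0 ∈ Q.a₁) (_ : g 1 ∈ Q.a₂), eVariationOn g (Set.Icc 0 1)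

/-- The internal distance `s_b(Q)` between the `b`-sides. -/
def sb (Q : JordanQuadrilateral) : ℝ≥0∞ :=
  ⨅ (g : ℝ → ℂ) (_ : ContinuousOn g (Set.Icc 0 1))
    (_ : Set.MapsTo g (Set.Icc 0 1) (closure Q.Q))
    (_ : Set.MapsTo g (Set.Ioo 0 1) Q.Q)
    (_ : g 0 ∈ Q.b₁) (_ : g 1 ∈ Q.b₂), eVariationOn g (Set.Icc 0 1)

/-- A rectifiable curve in `Q` joining side `a₁` to side `a₂` (a rectifiable curve can always
be reparametrized as a Lipschitz map on `[0,1]`). -/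
def IsJoiningCurve (Q : JordanQuadrilateral) (g : ℝ → ℂ) : Prop :=
  (∃ K : ℝ≥0, LipschitzOnWith K g (Set.Icc 0 1)) ∧
    Set.MapsTo g (Set.Ioo 0 1) Q.Q ∧ g 0 ∈ Q.a₁ ∧ g 1 ∈ Q.a₂

end JordanQuadrilateral

/-- The arclength integral `∫_g ρ |dz|` of a density `ρ` along a curve `g` defined on `[0,1]`. -/
def quadCurveIntegral (ρ : ℂ → ℝ≥0∞) (g : ℝ → ℂ) : ℝ≥0∞ :=
  ∫⁻ t in Set.Icc (0 : ℝ) 1, ρ (g t) * (‖deriv g t‖₊ : ℝ≥0∞)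

namespace JordanQuadrilateral

/-- A Borel density `ρ` is admissible for `Q` if `∫_g ρ |dz| ≥ 1` for every rectifiable
curve `g` in `Q` joining the `a`-sides. -/
def IsAdmissible (Q : JordanQuadrilateral) (ρ : ℂ → ℝ≥0∞) : Prop :=
  Measurable ρ ∧ ∀ g : ℝ → ℂ, Q.IsJoiningCurve g → 1 ≤ quadCurveIntegral ρ g

/-- The modulus `M(Q)` of the quadrilateral: the modulus of the family of rectifiable curves
in `Q` joining side `a₁` to side `a₂`. -/
def modulus (Q : JordanQuadrilateral) : ℝ≥0∞ :=
  ⨅ (ρ : ℂ → ℝ≥0∞) (_ : Q.IsAdmissible ρ), ∫⁻ z, ρ z ^ 2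

/-- The circle of center `c` and radius `r` meets (at least) three distinct sides of `Q`. -/
def TouchesThreeSides (Q : JordanQuadrilateral) (c : ℂ) (r : ℝ) : Prop :=
  ∃ i j k : Fin 4, i ≠ j ∧ i ≠ k ∧ j ≠ k ∧
    (Metric.sphere c r ∩ Q.side i).Nonempty ∧
    (Metric.sphere c r ∩ Q.side j).Nonempty ∧
    (Metric.sphere c r ∩ Q.side k).Nonempty

end JordanQuadrilateral

/-- A sequence of Jordan quadrilaterals converges to `Q` from inside: `closure (Qₙ) ⊆ closure Q`
and each side of `Qₙ` converges to the corresponding side of `Q` in the Hausdorff distance. -/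
def ConvergesFromInside (Qn : ℕ → JordanQuadrilateral) (Q : JordanQuadrilateral) : Prop :=
  (∀ n, closure (Qn n).Q ⊆ closure Q.Q) ∧
    ∀ ε > 0, ∃ N : ℕ, ∀ n ≥ N, ∀ i : Fin 4,
      Metric.hausdorffDist ((Qn n).side i) (Q.side i) < ε

/-- Near `v`, the frontier of `Q` consists of exactly two line segments emanating from `v`
making an angle of `π/2` radians (the directions `u` and `±I·u` are orthogonal). -/
def HasRightAngleCorner (Q : Set ℂ) (v : ℂ) : Prop :=
  ∃ (u w : ℂ) (ε : ℝ), 0 < ε ∧ ‖u‖ = 1 ∧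
    (w = Complex.I * u ∨ w = -(Complex.I * u)) ∧
    frontier Q ∩ Metric.ball v ε =
      (segment ℝ v (v + ε • u) ∪ segment ℝ v (v + ε • w)) ∩ Metric.ball v ε

section Helpers

namespace JordanQuadrilateral

variable (P : JordanQuadrilateral)

lemma side_zero : P.side 0 = P.a₁ := rfl
lemma side_one : P.side 1 = P.b₁ := rfl
lemma side_two : P.side 2 = P.a₂ := rfl
lemma side_three : P.side 3 = P.b₂ := rfl

lemma side_subset_frontier (i : Fin 4) : P.side i ⊆ frontier P.Q := by
  have h1 := P.ht₁; have h2 := P.h₁₂; have h3 := P.h₂₃; have h4 := P.h₃₄; have h5 := P.ht₄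
  rw [← P.γ_image]
  fin_cases i
  · show P.a₁ ⊆ _
    rintro _ ⟨t, ht, rfl⟩
    exact ⟨t, ⟨by linarith [ht.1], by linarith [ht.2]⟩, rfl⟩
  · show P.b₁ ⊆ _
    rintro _ ⟨t, ht, rfl⟩
    exact ⟨t, ⟨by linarith [ht.1], by linarith [ht.2]⟩, rfl⟩
  · show P.a₂ ⊆ _
    rintro _ ⟨t, ht, rfl⟩
    exact ⟨t, ⟨by linarith [ht.1], by linarith [ht.2]⟩, rfl⟩
  · show P.b₂ ⊆ _
    rintro _ ⟨t, ht, rfl⟩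
    by_cases h : t < 1
    · exact ⟨t, ⟨by linarith [ht.1], h⟩, rfl⟩
    · push_neg at h
      refine ⟨t - 1, ⟨by linarith [ht.2], by linarith [ht.2]⟩, ?_⟩
      have hp := P.γ_periodic (t - 1)
      rw [show t - 1 + 1 = t by ring] at hp
      exact hp.symm

lemma side_isCompact (i : Fin 4) : IsCompact (P.side i) := by
  fin_cases i <;> exact isCompact_Icc.image P.γ_continuous

lemma side_nonempty (i : Fin 4) : (P.side i).Nonempty := by
  have h1 := P.ht₁; have h2 := P.h₁₂; have h3 := P.h₂₃; have h4 := P.h₃₄; have h5 := P.ht₄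
  fin_cases i
  · exact ⟨_, Set.mem_image_of_mem _ (Set.left_mem_Icc.mpr h2.le)⟩
  · exact ⟨_, Set.mem_image_of_mem _ (Set.left_mem_Icc.mpr h3.le)⟩
  · exact ⟨_, Set.mem_image_of_mem _ (Set.left_mem_Icc.mpr h4.le)⟩
  · exact ⟨_, Set.mem_image_of_mem _ (Set.left_mem_Icc.mpr (by linarith))⟩

lemma frontier_mem_side {w : ℂ} (hw : w ∈ frontier P.Q) : ∃ i : Fin 4, w ∈ P.side i := by
  have h1 := P.ht₁; have h2 := P.h₁₂; have h3 := P.h₂₃; have h4 := P.h₃₄; have h5 := P.ht₄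
  rw [← P.γ_image] at hw
  obtain ⟨t, ht, rfl⟩ := hw
  rcases le_or_gt t P.t₁ with h | h
  · refine ⟨3, ?_⟩
    rw [P.side_three]
    exact ⟨t + 1, ⟨by linarith [ht.1], by linarith⟩, P.γ_periodic t⟩
  rcases le_or_gt t P.t₂ with ha | ha
  · exact ⟨0, ⟨t, ⟨h.le, ha⟩, rfl⟩⟩
  rcases le_or_gt t P.t₃ with hb | hb
  · exact ⟨1, ⟨t, ⟨ha.le, hb⟩, rfl⟩⟩
  rcases le_or_gt t P.t₄ with hc | hc
  · exact ⟨2, ⟨t, ⟨hb.le, hc⟩, rfl⟩⟩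
  · refine ⟨3, ?_⟩
    rw [P.side_three]
    exact ⟨t, ⟨hc.le, by linarith [ht.2]⟩, rfl⟩

lemma a_sides_disjoint {p : ℂ} (h0 : p ∈ P.a₁) (h2 : p ∈ P.a₂) : False := by
  have k1 := P.ht₁; have k2 := P.h₁₂; have k3 := P.h₂₃; have k4 := P.h₃₄; have k5 := P.ht₄
  obtain ⟨s, hs, rfl⟩ := h0
  obtain ⟨t, ht, hst⟩ := h2
  have heq := P.γ_injOn ⟨by linarith [ht.1], by linarith [ht.2]⟩
    ⟨by linarith [hs.1], by linarith [hs.2]⟩ hst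
  linarith [hs.2, ht.1]

lemma b_sides_disjoint {p : ℂ} (hb1 : p ∈ P.b₁) (hb2 : p ∈ P.b₂) : False := by
  have k1 := P.ht₁; have k2 := P.h₁₂; have k3 := P.h₂₃; have k4 := P.h₃₄; have k5 := P.ht₄
  obtain ⟨s, hs, rfl⟩ := hb1
  obtain ⟨t, ht, hst⟩ := hb2
  rcases lt_or_ge t 1 with h | h
  · have heq := P.γ_injOn ⟨by linarith [ht.1], h⟩ ⟨by linarith [hs.1], by linarith [hs.2]⟩ hst
    linarith [hs.2, ht.1]
  · have hp : P.γ (t - 1) = P.γ t := by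
      have := P.γ_periodic (t - 1)
      rw [show t - 1 + 1 = t by ring] at this
      exact this.symm
    have heq := P.γ_injOn ⟨by linarith, by linarith [ht.2]⟩
      ⟨by linarith [hs.1], by linarith [hs.2]⟩ (hp.trans hst)
    linarith [hs.1, ht.2]

lemma not_mem_three_sides {i j k : Fin 4} (hij : i ≠ j) (hik : i ≠ k) (hjk : j ≠ k) {p : ℂ}
    (hi : p ∈ P.side i) (hj : p ∈ P.side j) (hk : p ∈ P.side k) : False := by
  have key : ∀ i j k : Fin 4, i ≠ j → i ≠ k → j ≠ k →
      ((i = 0 ∨ j = 0 ∨ k = 0) ∧ (i = 2 ∨ j = 2 ∨ k = 2)) ∨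
      ((i = 1 ∨ j = 1 ∨ k = 1) ∧ (i = 3 ∨ j = 3 ∨ k = 3)) := by decide
  have getm : ∀ l : Fin 4, (i = l ∨ j = l ∨ k = l) → p ∈ P.side l := by
    rintro l (rfl | rfl | rfl) <;> assumption
  rcases key i j k hij hik hjk with ⟨g0, g2⟩ | ⟨g1, g3⟩
  · exact P.a_sides_disjoint (P.side_zero ▸ getm 0 g0) (P.side_two ▸ getm 2 g2)
  · exact P.b_sides_disjoint (P.side_one ▸ getm 1 g1) (P.side_three ▸ getm 3 g3)

end JordanQuadrilateral

lemma aux_ultrafilter_const {α : Type*} [Finite α] (F : Ultrafilter ℕ) (f : ℕ → α) :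
    ∃ a, ∀ᶠ n in (F : Filter ℕ), f n = a := by
  by_contra h
  push_neg at h
  have h' : ∀ a : α, ∀ᶠ n in (F : Filter ℕ), f n ≠ a := fun a =>
    h a
  obtain ⟨n, hn⟩ := (Filter.eventually_all.2 h').exists
  exact hn (f n) rfl

end Helpers

/-- If an increasing sequence of Jordan quadrilaterals converging to `Q` from inside each
contains a disk whose boundary circle meets three distinct sides, then so does `Q`. -/
theorem limit_disk (Q : JordanQuadrilateral) (Qn : ℕ → JordanQuadrilateral)
    (hmono : ∀ n, (Qn n).Q ⊆ (Qn (n + 1)).Q)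
    (hconv : ConvergesFromInside Qn Q)
    (hdisks : ∀ n, ∃ c ∈ (Qn n).Q, ∃ r > (0 : ℝ),
      Metric.ball c r ⊆ (Qn n).Q ∧ (Qn n).TouchesThreeSides c r) :
    ∃ c ∈ Q.Q, ∃ r > (0 : ℝ), Metric.ball c r ⊆ Q.Q ∧ Q.TouchesThreeSides c r := by
  classical
  obtain ⟨hsub, hside⟩ := hconv
  choose c hc r hr hball htouch using hdisks
  simp only [JordanQuadrilateral.TouchesThreeSides, Set.nonempty_def] at htouch
  choose i j k hij hik hjk hne1 hne2 hne3 using htouch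
  choose x hx using hne1
  choose y hy using hne2
  choose z hz using hne3
  set K := closure Q.Q with hKdef
  have hK : IsCompact K := Q.isBounded.isCompact_closure
  have hcK : ∀ n, c n ∈ K := fun n => hsub n (subset_closure (hc n))
  have hfK : ∀ (n : ℕ) (w : ℂ) (l : Fin 4), w ∈ (Qn n).side l → w ∈ K := fun n w l hw =>
    hsub n (frontier_subset_closure ((Qn n).side_subset_frontier l hw))
  have hxK : ∀ n, x n ∈ K := fun n => hfK n _ _ (hx n).2
  have hyK : ∀ n, y n ∈ K := fun n => hfK n _ _ (hy n).2
  have hzK : ∀ n, z n ∈ K := fun n => hfK n _ _ (hz n).2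
  set M := Metric.diam K with hMdef
  have hrIcc : ∀ n, r n ∈ Set.Icc (0 : ℝ) M := by
    intro n
    refine ⟨(hr n).le, ?_⟩
    have hd : dist (x n) (c n) = r n := mem_sphere.mp (hx n).1
    rw [← hd]
    exact Metric.dist_le_diam_of_mem hK.isBounded (hxK n) (hcK n)
  set F : Ultrafilter ℕ := Filter.hyperfilter ℕ with hFdef
  have hFatTop : (F : Filter ℕ) ≤ atTop := by
    rw [← Nat.cofinite_eq_atTop]; exact Filter.hyperfilter_le_cofinite
  set Φ : ℕ → ℂ × ℝ × ℂ × ℂ × ℂ := fun n => (c n, r n, x n, y n, z n) with hΦdef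
  have hS : IsCompact (K ×ˢ (Set.Icc (0 : ℝ) M) ×ˢ K ×ˢ K ×ˢ K) :=
    hK.prod (isCompact_Icc.prod (hK.prod (hK.prod hK)))
  obtain ⟨a, -, ha⟩ := hS.ultrafilter_le_nhds (F.map Φ) (by
    rw [Ultrafilter.coe_map, Filter.le_principal_iff, Filter.mem_map]
    exact Filter.univ_mem' fun n => ⟨hcK n, hrIcc n, hxK n, hyK n, hzK n⟩)
  have hΦ : Tendsto Φ (F : Filter ℕ) (𝓝 a) := by
    rw [Tendsto, ← Ultrafilter.coe_map]; exact ha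
  obtain ⟨c0, r0, x0, y0, z0⟩ := a
  have hct : Tendsto c (F : Filter ℕ) (𝓝 c0) := (continuous_fst.tendsto _).comp hΦ
  have hrt : Tendsto r (F : Filter ℕ) (𝓝 r0) :=
    (continuous_fst.tendsto _).comp ((continuous_snd.tendsto _).comp hΦ)
  have hxt : Tendsto x (F : Filter ℕ) (𝓝 x0) :=
    (continuous_fst.tendsto _).comp
      ((continuous_snd.tendsto _).comp ((continuous_snd.tendsto _).comp hΦ))
  have hyt : Tendsto y (F : Filter ℕ) (𝓝 y0) :=
    (continuous_fst.tendsto _).comp ((continuous_snd.tendsto _).comp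
      ((continuous_snd.tendsto _).comp ((continuous_snd.tendsto _).comp hΦ)))
  have hzt : Tendsto z (F : Filter ℕ) (𝓝 z0) :=
    (continuous_snd.tendsto _).comp ((continuous_snd.tendsto _).comp
      ((continuous_snd.tendsto _).comp ((continuous_snd.tendsto _).comp hΦ)))
  -- constant indices along the ultrafilter
  obtain ⟨⟨v1, v2, v3⟩, hv⟩ := aux_ultrafilter_const F (fun n => (i n, j n, k n))
  obtain ⟨n₀, hn₀⟩ := hv.exists
  have hiv : i n₀ = v1 := congrArg (fun p => p.1) hn₀
  have hjv : j n₀ = v2 := congrArg (fun p => p.2.1) hn₀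
  have hkv : k n₀ = v3 := congrArg (fun p => p.2.2) hn₀
  have hv12 : v1 ≠ v2 := by rw [← hiv, ← hjv]; exact hij n₀
  have hv13 : v1 ≠ v3 := by rw [← hiv, ← hkv]; exact hik n₀
  have hv23 : v2 ≠ v3 := by rw [← hjv, ← hkv]; exact hjk n₀
  have hvx : ∀ᶠ n in (F : Filter ℕ), x n ∈ (Qn n).side v1 := hv.mono fun n hn => by
    have : i n = v1 := congrArg (fun p => p.1) hn
    rw [← this]; exact (hx n).2
  have hvy : ∀ᶠ n in (F : Filter ℕ), y n ∈ (Qn n).side v2 := hv.mono fun n hn => by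
    have : j n = v2 := congrArg (fun p => p.2.1) hn
    rw [← this]; exact (hy n).2
  have hvz : ∀ᶠ n in (F : Filter ℕ), z n ∈ (Qn n).side v3 := hv.mono fun n hn => by
    have : k n = v3 := congrArg (fun p => p.2.2) hn
    rw [← this]; exact (hz n).2
  -- limits of boundary points lie on the corresponding side of Q
  have key : ∀ (w : ℕ → ℂ) (w0 : ℂ) (l : Fin 4), Tendsto w (F : Filter ℕ) (𝓝 w0) →
      (∀ᶠ n in (F : Filter ℕ), w n ∈ (Qn n).side l) → w0 ∈ Q.side l := by
    intro w w0 l hw hwl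
    have hcl : IsClosed (Q.side l) := (Q.side_isCompact l).isClosed
    rw [← hcl.closure_eq, Metric.mem_closure_iff]
    intro ε hε
    obtain ⟨N, hN⟩ := hside (ε / 2) (by positivity)
    have E1 : ∀ᶠ n in (F : Filter ℕ), w n ∈ Metric.ball w0 (ε / 2) :=
      hw (Metric.ball_mem_nhds _ (by positivity))
    have E2 : ∀ᶠ n in (F : Filter ℕ), N ≤ n := hFatTop (Filter.eventually_ge_atTop N)
    obtain ⟨n, h1, h2, h3⟩ := (E1.and (E2.and hwl)).exists
    obtain ⟨u, hu, hdu⟩ := Metric.exists_dist_lt_of_hausdorffDist_lt h3 (hN n h2 l)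
      (Metric.hausdorffEdist_ne_top_of_nonempty_of_bounded ((Qn n).side_nonempty l)
        (Q.side_nonempty l) ((Qn n).side_isCompact l).isBounded (Q.side_isCompact l).isBounded)
    refine ⟨u, hu, ?_⟩
    have h1' : dist (w n) w0 < ε / 2 := Metric.mem_ball.mp h1
    calc dist w0 u ≤ dist w0 (w n) + dist (w n) u := dist_triangle _ _ _
      _ < ε := by rw [dist_comm w0 (w n)]; linarith
  have hxs : x0 ∈ Q.side v1 := key x x0 v1 hxt hvx
  have hys : y0 ∈ Q.side v2 := key y y0 v2 hyt hvy
  have hzs : z0 ∈ Q.side v3 := key z z0 v3 hzt hvz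
  -- the limit points lie on the limit sphere
  have keyd : ∀ (w : ℕ → ℂ) (w0 : ℂ), Tendsto w (F : Filter ℕ) (𝓝 w0) →
      (∀ n, w n ∈ Metric.sphere (c n) (r n)) → dist w0 c0 = r0 := by
    intro w w0 hw hws
    have h1 : Tendsto (fun n => dist (w n) (c n)) (F : Filter ℕ) (𝓝 (dist w0 c0)) :=
      hw.dist hct
    have h2 : (fun n => dist (w n) (c n)) = r := funext fun n => mem_sphere.mp (hws n)
    rw [h2] at h1
    exact tendsto_nhds_unique h1 hrt
  have hdx : dist x0 c0 = r0 := keyd x x0 hxt fun n => (hx n).1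
  have hdy : dist y0 c0 = r0 := keyd y y0 hyt fun n => (hy n).1
  have hdz : dist z0 c0 = r0 := keyd z z0 hzt fun n => (hz n).1
  -- positivity of the limit radius
  have hr0 : 0 ≤ r0 := ge_of_tendsto hrt (Filter.Eventually.of_forall fun n => (hr n).le)
  have hr0pos : 0 < r0 := by
    rcases hr0.lt_or_eq with h | h
    · exact h
    · exfalso
      have hx0 : x0 = c0 := by rw [← dist_eq_zero, hdx, ← h]
      have hy0 : y0 = c0 := by rw [← dist_eq_zero, hdy, ← h]
      have hz0 : z0 = c0 := by rw [← dist_eq_zero, hdz, ← h]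
      exact Q.not_mem_three_sides hv12 hv13 hv23 (hx0 ▸ hxs) (hy0 ▸ hys) (hz0 ▸ hzs)
  -- the limit ball is contained in Q
  have hballQ : Metric.ball c0 r0 ⊆ Q.Q := by
    intro w hw
    have hwc : dist w c0 < r0 := Metric.mem_ball.mp hw
    set δ := (r0 - dist w c0) / 4 with hδdef
    have hδ : 0 < δ := by rw [hδdef]; linarith
    have EA : ∀ᶠ n in (F : Filter ℕ), Metric.ball w (2 * δ) ⊆ (Qn n).Q := by
      have E1 := hct (Metric.ball_mem_nhds c0 hδ)
      have E2 := hrt (Metric.ball_mem_nhds r0 hδ)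
      filter_upwards [E1, E2] with n h1 h2
      have h1' : dist (c n) c0 < δ := Metric.mem_ball.mp h1
      have h2' : |r n - r0| < δ := by
        have := Metric.mem_ball.mp h2; rwa [Real.dist_eq] at this
      have h2'' := abs_lt.mp h2'
      intro u hu
      have hu' : dist u w < 2 * δ := Metric.mem_ball.mp hu
      have t4 := dist_triangle4 u w c0 (c n)
      have hcc : dist c0 (c n) < δ := by rw [dist_comm]; exact h1'
      refine hball n (Metric.mem_ball.mpr ?_)
      have : dist u (c n) < r n := by linarith [h2''.1]
      exact this
    have hwcl : w ∈ closure Q.Q := by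
      obtain ⟨n, hn⟩ := EA.exists
      exact hsub n (subset_closure (hn (Metric.mem_ball_self (by linarith))))
    have hwnf : w ∉ frontier Q.Q := by
      intro hwf
      obtain ⟨l, hwl⟩ := Q.frontier_mem_side hwf
      obtain ⟨N, hN⟩ := hside δ hδ
      have E2 : ∀ᶠ n in (F : Filter ℕ), N ≤ n := hFatTop (Filter.eventually_ge_atTop N)
      obtain ⟨n, h1, h2⟩ := (EA.and E2).exists
      obtain ⟨u, hu, hdu⟩ := Metric.exists_dist_lt_of_hausdorffDist_lt' hwl (hN n h2 l)
        (Metric.hausdorffEdist_ne_top_of_nonempty_of_bounded ((Qn n).side_nonempty l)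
          (Q.side_nonempty l) ((Qn n).side_isCompact l).isBounded (Q.side_isCompact l).isBounded)
      have huQ : u ∈ (Qn n).Q := h1 (Metric.mem_ball.mpr (by linarith))
      have hufr : u ∈ frontier (Qn n).Q := (Qn n).side_subset_frontier l hu
      rw [(Qn n).isOpen.frontier_eq] at hufr
      exact hufr.2 huQ
    have : w ∈ interior Q.Q := by rw [← closure_diff_frontier]; exact ⟨hwcl, hwnf⟩
    rwa [Q.isOpen.interior_eq] at this
  exact ⟨c0, hballQ (Metric.mem_ball_self hr0pos), r0, hr0pos, hballQ,
    v1, v2, v3, hv12, hv13, hv23,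
    ⟨x0, mem_sphere.mpr hdx, hxs⟩, ⟨y0, mem_sphere.mpr hdy, hys⟩, ⟨z0, mem_sphere.mpr hdz, hzs⟩⟩
end
end

section
/- Let Q be a Jordan quadrilateral, c ∈ Q and r > 0 with the open disk D(c,r) contained in Q. If the circle {z : |z − c| = r} contains a point of the side a₁ and a point of the side a₂, then 2r ≥ s_a(Q); in particular, diam(Q) ≥ s_a(Q). -/
open Set Metric MeasureTheory Filter
open scoped ENNReal NNReal Topology

noncomputable section

/-- If a disk `D(c,r) ⊆ Q` has boundary circle meeting both `a`-sides of `Q`, then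
`2r ≥ s_a(Q)`; in particular `diam Q ≥ s_a(Q)`. -/
theorem two_radius_ge_sa (Q : JordanQuadrilateral) (c : ℂ) (r : ℝ)
    (hc : c ∈ Q.Q) (hr : 0 < r) (hball : Metric.ball c r ⊆ Q.Q)
    (h1 : (Metric.sphere c r ∩ Q.a₁).Nonempty)
    (h2 : (Metric.sphere c r ∩ Q.a₂).Nonempty) :
    Q.sa ≤ ENNReal.ofReal (2 * r) ∧ Q.sa ≤ EMetric.diam Q.Q := by
  obtain ⟨x, hxs, hxa⟩ := h1
  obtain ⟨y, hys, hya⟩ := h2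
  have hxr : ‖x - c‖ = r := by
    have := mem_sphere_iff_norm.mp hxs; simpa using this
  have hyr : ‖y - c‖ = r := by
    have := mem_sphere_iff_norm.mp hys; simpa using this
  -- the piecewise-linear curve x → c → y
  set g : ℝ → ℂ := fun t => if t ≤ 1/2 then c + (1-2*t) • (x-c) else c + (2*t-1) • (y-c) with hg
  have hg0 : g 0 = x := by simp [hg]
  have hg1 : g 1 = y := by norm_num [hg]
  have hgc : Continuous g := by
    apply Continuous.if_le
    · fun_prop
    · fun_prop
    · exact continuous_id
    · exact continuous_const
    · intro t ht; rw [ht]; norm_num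
  -- interior points lie in the ball
  have hint : Set.MapsTo g (Set.Ioo 0 1) Q.Q := by
    intro t ht
    apply hball
    rw [Metric.mem_ball]
    by_cases h : t ≤ 1/2
    · have : g t = c + (1-2*t) • (x-c) := by simp only [hg]; rw [if_pos h]
      rw [this, dist_eq_norm]
      have : c + (1-2*t) • (x-c) - c = (1-2*t) • (x-c) := by ring_nf
      rw [this, norm_smul, Real.norm_eq_abs, hxr]
      have h1 : |1 - 2*t| < 1 := by
        rw [abs_lt]; constructor <;> nlinarith [ht.1, ht.2]
      nlinarith
    · have : g t = c + (2*t-1) • (y-c) := by simp only [hg]; rw [if_neg h]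
      rw [this, dist_eq_norm]
      have : c + (2*t-1) • (y-c) - c = (2*t-1) • (y-c) := by ring_nf
      rw [this, norm_smul, Real.norm_eq_abs, hyr]
      have h1 : |2*t - 1| < 1 := by
        rw [abs_lt]; constructor <;> nlinarith [ht.1, ht.2]
      nlinarith
  have ha1f : Q.a₁ ⊆ frontier Q.Q := by
    rw [← Q.γ_image]
    apply Set.image_mono
    exact fun u hu => ⟨le_trans Q.ht₁ hu.1, lt_of_le_of_lt hu.2 (by linarith [Q.h₂₃, Q.h₃₄, Q.ht₄])⟩
  have ha2f : Q.a₂ ⊆ frontier Q.Q := by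
    rw [← Q.γ_image]
    apply Set.image_mono
    exact fun u hu => ⟨le_trans (by linarith [Q.ht₁, Q.h₁₂, Q.h₂₃] : (0:ℝ) ≤ Q.t₃) hu.1, lt_of_le_of_lt hu.2 Q.ht₄⟩
  have hcl : Set.MapsTo g (Set.Icc 0 1) (closure Q.Q) := by
    intro t ht
    rcases eq_or_lt_of_le ht.1 with h0 | h0
    · rw [← h0, hg0]; exact frontier_subset_closure (ha1f hxa)
    rcases eq_or_lt_of_le ht.2 with h1 | h1
    · rw [h1, hg1]; exact frontier_subset_closure (ha2f hya)
    · exact subset_closure (hint ⟨h0, h1⟩)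
  -- sa ≤ length of g
  have hsa : Q.sa ≤ eVariationOn g (Set.Icc 0 1) := by
    unfold JordanQuadrilateral.sa
    refine iInf_le_of_le g (iInf_le_of_le hgc.continuousOn (iInf_le_of_le hcl
      (iInf_le_of_le hint (iInf_le_of_le (hg0 ▸ hxa) (iInf_le _ (hg1 ▸ hya))))))
  -- the length of g is at most 2r
  set K : ℝ≥0 := (2*r).toNNReal with hK
  have hKr : (K : ℝ) = 2*r := Real.coe_toNNReal _ (by linarith)
  have half_mem : (1/2 : ℝ) ∈ Set.Icc (0:ℝ) 1 := by norm_num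
  have idvar : ∀ a b : ℝ, a ≤ b → eVariationOn id (Set.Icc a b) ≤ ENNReal.ofReal (b - a) := by
    intro a b hab
    have := MonotoneOn.eVariationOn_le (f := fun t : ℝ => t) (s := Set.Icc a b)
      (fun u _ v _ huv => huv) (a := a) (b := b)
      (Set.left_mem_Icc.mpr hab) (Set.right_mem_Icc.mpr hab)
    simpa [Set.inter_self] using this
  have lipvar : ∀ (z : ℂ) (f : ℝ → ℂ) (d sl a b : ℝ), a ≤ b → ‖z - c‖ = r → |sl| ≤ 2 →
      (∀ t ∈ Set.Icc a b, f t = c + (d + sl*t) • (z - c)) →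
      eVariationOn f (Set.Icc a b) ≤ ENNReal.ofReal (2*r*(b-a)) := by
    intro z f d sl a b hab hz hsl hf
    have heq : Set.EqOn f ((fun t => c + (d + sl*t) • (z - c)) ∘ id) (Set.Icc a b) := by
      intro t ht; exact hf t ht
    rw [eVariationOn.eq_of_eqOn heq]
    have hlip : LipschitzWith K (fun t : ℝ => c + (d + sl*t) • (z - c)) := by
      apply LipschitzWith.of_dist_le_mul
      intro s t
      rw [dist_add_left, dist_eq_norm, ← sub_smul, norm_smul, Real.norm_eq_abs, hz]
      have h1 : (d + sl*s) - (d + sl*t) = sl*(s - t) := by ring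
      rw [h1, abs_mul, hKr, Real.dist_eq]
      nlinarith [mul_nonneg (mul_nonneg (sub_nonneg.mpr hsl) (abs_nonneg (s - t))) hr.le]
    have hKc : (K : ℝ≥0∞) = ENNReal.ofReal (2*r) := by
      rw [← hKr, ENNReal.ofReal_coe_nnreal]
    calc eVariationOn ((fun t => c + (d + sl*t) • (z - c)) ∘ id) (Set.Icc a b)
        ≤ K * eVariationOn id (Set.Icc a b) :=
          (hlip.lipschitzOnWith (s := Set.Icc a b)).comp_eVariationOn_le (Set.mapsTo_id _)
      _ ≤ K * ENNReal.ofReal (b - a) := mul_le_mul_right (idvar a b hab) _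
      _ = ENNReal.ofReal (2*r*(b-a)) := by
          rw [hKc, ← ENNReal.ofReal_mul (by linarith)]
  have e1 : eVariationOn g (Set.Icc (0:ℝ) (1/2)) ≤ ENNReal.ofReal r := by
    have hf : ∀ t ∈ Set.Icc (0:ℝ) (1/2), g t = c + (1 + (-2)*t) • (x - c) := by
      intro t ht
      have h : t ≤ 1/2 := ht.2
      rw [show (1 + (-2)*t : ℝ) = 1 - 2*t by ring]
      simp only [hg, if_pos h]
    have := lipvar x g 1 (-2) 0 (1/2) (by norm_num) hxr (by rw [abs_neg]; simp) hf
    calc eVariationOn g (Set.Icc (0:ℝ) (1/2)) ≤ ENNReal.ofReal (2*r*(1/2-0)) := this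
      _ = ENNReal.ofReal r := by congr 1; ring
  have e2 : eVariationOn g (Set.Icc (1/2:ℝ) 1) ≤ ENNReal.ofReal r := by
    have hf : ∀ t ∈ Set.Icc (1/2:ℝ) 1, g t = c + ((-1) + 2*t) • (y - c) := by
      intro t ht
      rw [show ((-1) + 2*t : ℝ) = 2*t - 1 by ring]
      rcases eq_or_lt_of_le ht.1 with h | h
      · rw [← h]; norm_num [hg]
      · have h' : ¬ (t ≤ 1/2) := not_le.mpr h
        simp only [hg, if_neg h']
    have := lipvar y g (-1) 2 (1/2) 1 (by norm_num) hyr (by simp) hf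
    calc eVariationOn g (Set.Icc (1/2:ℝ) 1) ≤ ENNReal.ofReal (2*r*(1-1/2)) := this
      _ = ENNReal.ofReal r := by congr 1; ring
  have hsplit := eVariationOn.Icc_add_Icc g (s := Set.Icc (0:ℝ) 1)
    (a := 0) (b := 1/2) (c := 1) (by norm_num) (by norm_num) half_mem
  have hI1 : Set.Icc (0:ℝ) 1 ∩ Set.Icc 0 (1/2) = Set.Icc (0:ℝ) (1/2) := by
    rw [Set.Icc_inter_Icc]; norm_num
  have hI2 : Set.Icc (0:ℝ) 1 ∩ Set.Icc (1/2) 1 = Set.Icc (1/2:ℝ) 1 := by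
    rw [Set.Icc_inter_Icc]; norm_num
  have hI3 : Set.Icc (0:ℝ) 1 ∩ Set.Icc 0 1 = Set.Icc (0:ℝ) 1 := Set.inter_self _
  rw [hI1, hI2, hI3] at hsplit
  have hlen : eVariationOn g (Set.Icc (0:ℝ) 1) ≤ ENNReal.ofReal (2*r) := by
    rw [← hsplit]
    calc eVariationOn g (Set.Icc (0:ℝ) (1/2)) + eVariationOn g (Set.Icc (1/2:ℝ) 1)
        ≤ ENNReal.ofReal r + ENNReal.ofReal r := add_le_add e1 e2
      _ = ENNReal.ofReal (2*r) := by
          rw [← ENNReal.ofReal_add hr.le hr.le]; ring_nf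
  have main : Q.sa ≤ ENNReal.ofReal (2*r) := hsa.trans hlen
  refine ⟨main, main.trans ?_⟩
  -- 2r ≤ diam Q
  have hmem1 : (c + r : ℂ) ∈ Metric.closedBall c r := by
    rw [Metric.mem_closedBall, dist_eq_norm, add_sub_cancel_left, Complex.norm_real,
      Real.norm_eq_abs, abs_of_nonneg hr.le]
  have hmem2 : (c - r : ℂ) ∈ Metric.closedBall c r := by
    rw [Metric.mem_closedBall, dist_eq_norm, sub_sub_cancel_left, norm_neg, Complex.norm_real,
      Real.norm_eq_abs, abs_of_nonneg hr.le]
  calc ENNReal.ofReal (2*r) = edist (c + r : ℂ) (c - r : ℂ) := by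
        rw [edist_dist, dist_eq_norm]
        congr 1
        rw [show (c + (r:ℂ)) - (c - (r:ℂ)) = ((2*r : ℝ) : ℂ) by push_cast; ring,
          Complex.norm_real, Real.norm_eq_abs, abs_of_nonneg (by linarith)]
    _ ≤ EMetric.diam (Metric.closedBall c r) := EMetric.edist_le_diam_of_mem hmem1 hmem2
    _ = EMetric.diam (Metric.ball c r) := by
        rw [← closure_ball c hr.ne']; exact Metric.ediam_closure _
    _ ≤ EMetric.diam Q.Q := EMetric.diam_mono hball
end
end

section
/- Let a, b > 0 with a ≠ b and let R = (0,a) × (0,b) ⊂ ℂ be the open rectangle, regarded as a Jordan quadrilateral with quad-vertices at its four corners (so that its sides are the four edges of the rectangle). Then for every c ∈ R and r > 0 with the open disk D(c,r) contained in R, the circle {z : |z − c| = r} does not contain points of all four sides of R; that is, the number 3 in the main theorem is sharp. -/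
open Set Metric

noncomputable section


/-- In an open rectangle `(0,a) × (0,b)` (a Jordan quadrilateral whose four sides are the
four edges), no circle bounding a disk contained in the rectangle can meet all four sides:
the number three in the main theorem is sharp. -/
theorem rectangle_no_circle_touches_four_sides (a b : ℝ) (ha : 0 < a) (hb : 0 < b)
    (hab : a ≠ b) (R : Set ℂ)
    (hR : R = {z : ℂ | z.re ∈ Set.Ioo 0 a ∧ z.im ∈ Set.Ioo 0 b})
    (c : ℂ) (r : ℝ) (hr : 0 < r) (hball : Metric.ball c r ⊆ R) :
    ¬ ((Metric.sphere c r ∩ segment ℝ (0 : ℂ) (a : ℂ)).Nonempty ∧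
       (Metric.sphere c r ∩ segment ℝ (a : ℂ) (a + b * Complex.I)).Nonempty ∧
       (Metric.sphere c r ∩ segment ℝ (a + b * Complex.I) (b * Complex.I)).Nonempty ∧
       (Metric.sphere c r ∩ segment ℝ (b * Complex.I) (0 : ℂ)).Nonempty) := by
  subst hR
  rintro ⟨⟨z₁, hz₁s, hz₁⟩, ⟨z₂, hz₂s, hz₂⟩, ⟨z₃, hz₃s, hz₃⟩, ⟨z₄, hz₄s, hz₄⟩⟩
  -- points of the ball near the boundary give inner bounds on c
  have keyD : ∀ s : ℝ, 0 ≤ s → s < r → 0 < c.im - s := by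
    intro s hs0 hsr
    have hmem : c - (s : ℂ) * Complex.I ∈ Metric.ball c r := by
      simp [Complex.dist_eq, abs_of_nonneg hs0, hsr]
    have h := (hball hmem).2.1
    simpa using h
  have keyU : ∀ s : ℝ, 0 ≤ s → s < r → c.im + s < b := by
    intro s hs0 hsr
    have hmem : c + (s : ℂ) * Complex.I ∈ Metric.ball c r := by
      simp [Complex.dist_eq, abs_of_nonneg hs0, hsr]
    have h := (hball hmem).2.2
    simpa using h
  have keyL : ∀ s : ℝ, 0 ≤ s → s < r → 0 < c.re - s := by
    intro s hs0 hsr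
    have hmem : c - (s : ℂ) ∈ Metric.ball c r := by
      simp [Complex.dist_eq, abs_of_nonneg hs0, hsr]
    have h := (hball hmem).1.1
    simpa using h
  have keyR : ∀ s : ℝ, 0 ≤ s → s < r → c.re + s < a := by
    intro s hs0 hsr
    have hmem : c + (s : ℂ) ∈ Metric.ball c r := by
      simp [Complex.dist_eq, abs_of_nonneg hs0, hsr]
    have h := (hball hmem).1.2
    simpa using h
  have hdown : r ≤ c.im := by
    by_contra h; push_neg at h
    have h1 := keyD (max 0 c.im) (le_max_left _ _) (max_lt hr h)
    have h2 := le_max_right 0 c.im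
    linarith
  have hup : c.im ≤ b - r := by
    by_contra h; push_neg at h
    have h1 := keyU (max 0 (b - c.im)) (le_max_left _ _) (max_lt hr (by linarith))
    have h2 := le_max_right 0 (b - c.im)
    linarith
  have hleft : r ≤ c.re := by
    by_contra h; push_neg at h
    have h1 := keyL (max 0 c.re) (le_max_left _ _) (max_lt hr h)
    have h2 := le_max_right 0 c.re
    linarith
  have hright : c.re ≤ a - r := by
    by_contra h; push_neg at h
    have h1 := keyR (max 0 (a - c.re)) (le_max_left _ _) (max_lt hr (by linarith))
    have h2 := le_max_right 0 (a - c.re)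
    linarith
  -- coordinates of the touching points
  have him1 : z₁.im = 0 := by
    obtain ⟨t, u, ht, hu, htu, rfl⟩ := hz₁
    simp
  have hre2 : z₂.re = a := by
    obtain ⟨t, u, ht, hu, htu, rfl⟩ := hz₂
    simp [mul_comm]
    nlinarith
  have him3 : z₃.im = b := by
    obtain ⟨t, u, ht, hu, htu, rfl⟩ := hz₃
    simp
    nlinarith
  have hre4 : z₄.re = 0 := by
    obtain ⟨t, u, ht, hu, htu, rfl⟩ := hz₄
    simp
  -- sphere membership gives distance bounds
  have habs : ∀ z ∈ Metric.sphere c r, |z.im - c.im| ≤ r ∧ |z.re - c.re| ≤ r := by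
    intro z hz
    have hd : ‖z - c‖ = r := by
      rw [← Complex.dist_eq]; exact hz
    constructor
    · have := Complex.abs_im_le_norm (z - c)
      simpa [hd] using this
    · have := Complex.abs_re_le_norm (z - c)
      simpa [hd] using this
  have h1 := (habs z₁ hz₁s).1
  have h2 := (habs z₂ hz₂s).2
  have h3 := (habs z₃ hz₃s).1
  have h4 := (habs z₄ hz₄s).2
  rw [him1] at h1; rw [hre2] at h2; rw [him3] at h3; rw [hre4] at h4
  rw [abs_le] at h1 h2 h3 h4
  apply hab
  linarith [h1.1, h1.2, h2.1, h2.2, h3.1, h3.2, h4.1, h4.2]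
end
end

section
/- Let Q ⊂ ℂ be a bounded, open, connected, simply connected set whose frontier ∂Q is the image of an injective continuous map of the unit circle and is a finite union of nontrivial line segments, and let v ∈ ∂Q be a point such that for some r > 0 the set D(v,r) ∩ Q equals D(v,r) ∩ S, where S is an open sector with vertex v of opening angle π/2 (i.e., exactly two boundary segments meet at v at interior angle π/2). Then v is a limit point of the medial axis MA(Q); that is, v ∈ closure(MA(Q)). -/
open Set Metric MeasureTheory Filter
open scoped ENNReal NNReal Topology

noncomputable section

lemma frontier_inter_open_eq {X : Type*} [TopologicalSpace X] {A U : Set X} (hU : IsOpen U) :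
    frontier A ∩ U = frontier (A ∩ U) ∩ U := by
  ext p
  constructor
  · rintro ⟨⟨hc, hni⟩, hpU⟩
    refine ⟨⟨?_, fun hi => hni (interior_mono inter_subset_left hi)⟩, hpU⟩
    have := hU.inter_closure (t := A) ⟨hpU, hc⟩
    exact closure_mono (by rw [inter_comm]) this
  · rintro ⟨⟨hc, hni⟩, hpU⟩
    refine ⟨⟨closure_mono inter_subset_left hc, ?_⟩, hpU⟩
    intro hi
    apply hni
    rw [interior_inter, hU.interior_eq]
    exact ⟨hi, hpU⟩


/-- If the boundary of a polygonal Jordan domain has a corner of interior angle `π/2` at `v`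
(near `v` the domain coincides with an open quarter-plane sector with vertex `v`), then `v` is
a limit point of the medial axis. -/
theorem corner_is_limit_of_medialAxis (Q : Set ℂ) (hopen : IsOpen Q)
    (hbounded : Bornology.IsBounded Q) (hconn : IsConnected Q)
    (hsimply : SimplyConnectedSpace Q)
    (γ : ℝ → ℂ) (hγc : Continuous γ) (hγp : Function.Periodic γ 1)
    (hγi : Set.InjOn γ (Set.Ico 0 1)) (hγim : γ '' Set.Ico 0 1 = frontier Q)
    (hpoly : IsPolygonalBoundary Q)
    (v : ℂ) (hv : v ∈ frontier Q) (u : ℂ) (hu : ‖u‖ = 1) (r : ℝ) (hr : 0 < r)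
    (hsector : Metric.ball v r ∩ Q =
      Metric.ball v r ∩
        {z : ℂ | ∃ s t : ℝ, 0 < s ∧ 0 < t ∧ z = v + s • u + t • (Complex.I * u)}) :
    v ∈ closure (medialAxis Q) := by
  set S : Set ℂ := {z : ℂ | ∃ s t : ℝ, 0 < s ∧ 0 < t ∧ z = v + s • u + t • (Complex.I * u)}
    with hSdef
  have hu0 : u ≠ 0 := by intro h; rw [h] at hu; simp at hu
  set φ : ℂ → ℂ := fun p => (p - v) / u with hφdef
  -- basic computation
  have hφR : ∀ s t : ℝ, φ (v + s • u + t • (Complex.I * u)) = (s : ℂ) + t * Complex.I := by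
    intro s t
    simp only [hφdef, Complex.real_smul]
    field_simp
    ring
  have hφdist : ∀ p q : ℂ, dist (φ p) (φ q) = dist p q := by
    intro p q
    simp only [hφdef, dist_eq_norm, div_sub_div_same, norm_div, hu, div_one, sub_sub_sub_cancel_right]
  -- membership characterization
  have hmemS : ∀ p : ℂ, p ∈ S ↔ 0 < (φ p).re ∧ 0 < (φ p).im := by
    intro p
    constructor
    · rintro ⟨s, t, hs, ht, rfl⟩
      rw [hφR]
      simpa using ⟨hs, ht⟩
    · rintro ⟨h1, h2⟩
      refine ⟨(φ p).re, (φ p).im, h1, h2, ?_⟩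
      have h3 : (φ p) * u = p - v := by show (p - v) / u * u = p - v; exact div_mul_cancel₀ _ hu0
      have h4 : ((φ p).re : ℂ) + (φ p).im * Complex.I = φ p := Complex.re_add_im _
      rw [Complex.real_smul, Complex.real_smul]
      linear_combination -u * h4 - h3
  have hφcont : Continuous φ := by
    simp only [hφdef, div_eq_mul_inv]
    continuity
  have hSeq : S = φ ⁻¹' {c : ℂ | 0 < c.re ∧ 0 < c.im} := by
    ext p; exact hmemS p
  have hSopen : IsOpen S := by
    rw [hSeq]
    exact ((isOpen_lt continuous_const Complex.continuous_re).inter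
      (isOpen_lt continuous_const Complex.continuous_im)).preimage hφcont
  -- closure of S
  have hclS : closure S ⊆ {p : ℂ | 0 ≤ (φ p).re ∧ 0 ≤ (φ p).im} := by
    apply closure_minimal
    · intro p hp
      rcases (hmemS p).1 hp with ⟨h1, h2⟩
      exact ⟨le_of_lt h1, le_of_lt h2⟩
    · have : {p : ℂ | 0 ≤ (φ p).re ∧ 0 ≤ (φ p).im} =
        φ ⁻¹' ({c : ℂ | 0 ≤ c.re} ∩ {c : ℂ | 0 ≤ c.im}) := rfl
      rw [this]
      exact (IsClosed.inter (isClosed_le continuous_const Complex.continuous_re)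
        (isClosed_le continuous_const Complex.continuous_im)).preimage hφcont
  -- frontier identification inside the ball
  have hfr : frontier Q ∩ Metric.ball v r = frontier S ∩ Metric.ball v r := by
    rw [frontier_inter_open_eq (Metric.isOpen_ball), inter_comm Q, hsector, inter_comm _ S,
      ← frontier_inter_open_eq (Metric.isOpen_ball)]
  -- the main family of medial axis points
  have hmain : ∀ t : ℝ, 0 < t → 3 * t ≤ r →
      (v + t • u + t • (Complex.I * u)) ∈ medialAxis Q := by
    intro t ht htr
    set z : ℂ := v + t • u + t • (Complex.I * u) with hz
    set w : ℂ := v + t • u + (0:ℝ) • (Complex.I * u) with hw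
    set w' : ℂ := v + (0:ℝ) • u + t • (Complex.I * u) with hw'
    have hIu : ‖Complex.I * u‖ = 1 := by rw [norm_mul, Complex.norm_I, one_mul, hu]
    have hdzv : dist z v ≤ 2 * t := by
      have : z - v = t • u + t • (Complex.I * u) := by rw [hz]; ring
      rw [dist_eq_norm, this]
      calc ‖t • u + t • (Complex.I * u)‖ ≤ ‖t • u‖ + ‖t • (Complex.I * u)‖ := norm_add_le _ _
        _ = |t| * 1 + |t| * 1 := by rw [norm_smul, norm_smul, hu, hIu]; simp
        _ = 2 * t := by rw [abs_of_pos ht]; ring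
    have hzball : z ∈ Metric.ball v r := by
      rw [Metric.mem_ball]
      calc dist z v ≤ 2 * t := hdzv
        _ < 3 * t := by linarith
        _ ≤ r := htr
    have hzS : z ∈ S := ⟨t, t, ht, ht, rfl⟩
    have hzQ : z ∈ Q := by
      have : z ∈ Metric.ball v r ∩ S := ⟨hzball, hzS⟩
      rw [← hsector] at this
      exact this.2
    -- w, w' in frontier S
    have hwball : w ∈ Metric.ball v r := by
      rw [Metric.mem_ball, hw]
      have : v + t • u + (0:ℝ) • (Complex.I * u) - v = t • u := by ring_nf; simp
      rw [dist_eq_norm, this, norm_smul, hu, mul_one, Real.norm_eq_abs, abs_of_pos ht]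
      linarith
    have hw'ball : w' ∈ Metric.ball v r := by
      rw [Metric.mem_ball, hw']
      have : v + (0:ℝ) • u + t • (Complex.I * u) - v = t • (Complex.I * u) := by ring_nf; simp
      rw [dist_eq_norm, this, norm_smul, hIu, mul_one, Real.norm_eq_abs, abs_of_pos ht]
      linarith
    have hwclS : w ∈ closure S := by
      have htend : Tendsto (fun ε : ℝ => v + t • u + ε • (Complex.I * u)) (𝓝[>] 0) (𝓝 w) := by
        have hc : Continuous (fun ε : ℝ => v + t • u + ε • (Complex.I * u)) :=
          continuous_const.add (continuous_id.smul continuous_const)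
        have h0 := hc.tendsto 0
        simp only [zero_smul] at h0
        have : w = v + t • u + (0:ℂ) := by rw [hw]; simp
        rw [this]
        exact h0.mono_left nhdsWithin_le_nhds
      exact mem_closure_of_tendsto htend (eventually_nhdsWithin_of_forall
        (fun ε hε => ⟨t, ε, ht, hε, rfl⟩))
    have hw'clS : w' ∈ closure S := by
      have htend : Tendsto (fun ε : ℝ => v + ε • u + t • (Complex.I * u)) (𝓝[>] 0) (𝓝 w') := by
        have hc : Continuous (fun ε : ℝ => v + ε • u + t • (Complex.I * u)) :=
          (continuous_const.add (continuous_id.smul continuous_const)).add continuous_const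
        have h0 := hc.tendsto 0
        simp only [zero_smul] at h0
        have : w' = v + 0 + t • (Complex.I * u) := by rw [hw']; simp
        rw [this]
        exact h0.mono_left nhdsWithin_le_nhds
      exact mem_closure_of_tendsto htend (eventually_nhdsWithin_of_forall
        (fun ε hε => ⟨ε, t, hε, ht, rfl⟩))
    have hφw : φ w = (t : ℂ) := by rw [hw, hφR]; simp
    have hφw' : φ w' = (t : ℂ) * Complex.I := by rw [hw', hφR]; simp
    have hwnS : w ∉ S := by
      intro h
      rcases (hmemS w).1 h with ⟨_, h2⟩
      rw [hφw] at h2; simp at h2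
    have hw'nS : w' ∉ S := by
      intro h
      rcases (hmemS w').1 h with ⟨h1, _⟩
      rw [hφw'] at h1; simp at h1
    have hwfrS : w ∈ frontier S := by
      rw [hSopen.frontier_eq]; exact ⟨hwclS, hwnS⟩
    have hw'frS : w' ∈ frontier S := by
      rw [hSopen.frontier_eq]; exact ⟨hw'clS, hw'nS⟩
    have hwfrQ : w ∈ frontier Q := ((hfr ▸ (⟨hwfrS, hwball⟩ : w ∈ frontier S ∩ Metric.ball v r)) :
      w ∈ frontier Q ∩ Metric.ball v r).1
    have hw'frQ : w' ∈ frontier Q := ((hfr ▸ (⟨hw'frS, hw'ball⟩ :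
      w' ∈ frontier S ∩ Metric.ball v r)) : w' ∈ frontier Q ∩ Metric.ball v r).1
    -- distances
    have hφz : φ z = (t : ℂ) + t * Complex.I := hφR t t
    have hdzw : dist z w = t := by
      rw [← hφdist, hφz, hφw, dist_eq_norm]
      have : (t : ℂ) + t * Complex.I - t = t * Complex.I := by ring
      rw [this, norm_mul, Complex.norm_I, mul_one, Complex.norm_real, Real.norm_eq_abs,
        abs_of_pos ht]
    have hdzw' : dist z w' = t := by
      rw [← hφdist, hφz, hφw', dist_eq_norm]
      have : (t : ℂ) + t * Complex.I - t * Complex.I = t := by ring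
      rw [this, Complex.norm_real, Real.norm_eq_abs, abs_of_pos ht]
    have hww' : w ≠ w' := by
      intro h
      have : φ w = φ w' := by rw [h]
      rw [hφw, hφw'] at this
      have := congrArg Complex.im this
      simp at this
      exact ht.ne' this.symm
    -- lower bound on distances to frontier
    have hlow : ∀ p ∈ frontier Q, t ≤ dist z p := by
      intro p hp
      by_cases hpb : p ∈ Metric.ball v r
      · have hpS : p ∈ frontier S := ((hfr ▸ (⟨hp, hpb⟩ : p ∈ frontier Q ∩ Metric.ball v r)) :
          p ∈ frontier S ∩ Metric.ball v r).1
        rw [hSopen.frontier_eq] at hpS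
        obtain ⟨hpc, hpnS⟩ := hpS
        obtain ⟨h1, h2⟩ := hclS hpc
        rw [hmemS] at hpnS
        push_neg at hpnS
        rw [← hφdist z p, dist_eq_norm]
        rcases lt_or_ge 0 (φ p).re with hre | hre
        · have him : (φ p).im ≤ 0 := hpnS hre
          have him0 : (φ p).im = 0 := le_antisymm him h2
          calc t = |((φ z - φ p).im)| := by rw [hφz]; simp [him0, abs_of_pos ht]
            _ ≤ ‖φ z - φ p‖ := Complex.abs_im_le_norm _
        · have hre0 : (φ p).re = 0 := le_antisymm hre h1
          calc t = |((φ z - φ p).re)| := by rw [hφz]; simp [hre0, abs_of_pos ht]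
            _ ≤ ‖φ z - φ p‖ := Complex.abs_re_le_norm _
      · have : r ≤ dist p v := le_of_not_gt (by rwa [← Metric.mem_ball])
        have h2 := dist_triangle p z v
        have : r - 2 * t ≤ dist z p := by
          rw [dist_comm z p]
          linarith [dist_comm z v ▸ hdzv, dist_triangle p z v]
        linarith
    have hne : (frontier Q).Nonempty := ⟨w, hwfrQ⟩
    have hinf : Metric.infDist z (frontier Q) = t := by
      apply le_antisymm
      · calc Metric.infDist z (frontier Q) ≤ dist z w := Metric.infDist_le_dist_of_mem hwfrQ
          _ = t := hdzw
      · by_contra hlt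
        push_neg at hlt
        obtain ⟨p, hp, hdp⟩ := (Metric.infDist_lt_iff hne).1 hlt
        exact absurd hdp (not_lt.2 (hlow p hp))
    exact ⟨hzQ, w, hwfrQ, w', hw'frQ, hww', by rw [hdzw, hinf], by rw [hdzw', hinf]⟩
  -- conclude
  rw [Metric.mem_closure_iff]
  intro ε hε
  set t := min (r / 3) (ε / 3) with htdef
  have ht : 0 < t := lt_min (by linarith) (by linarith)
  have htr : 3 * t ≤ r := by
    have := min_le_left (r/3) (ε/3)
    nlinarith [min_le_left (r/3) (ε/3)]
  refine ⟨v + t • u + t • (Complex.I * u), hmain t ht htr, ?_⟩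
  have : v + t • u + t • (Complex.I * u) - v = t • u + t • (Complex.I * u) := by ring
  rw [dist_comm, dist_eq_norm, this]
  have hIu : ‖Complex.I * u‖ = 1 := by rw [norm_mul, Complex.norm_I, one_mul, hu]
  calc ‖t • u + t • (Complex.I * u)‖ ≤ ‖t • u‖ + ‖t • (Complex.I * u)‖ := norm_add_le _ _
    _ = |t| + |t| := by rw [norm_smul, norm_smul, hu, hIu]; simp
    _ = 2 * t := by rw [abs_of_pos ht]; ring
    _ < ε := by nlinarith [min_le_right (r/3) (ε/3)]
end
end
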